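/- (ℓ¹-almost invariance of Følner sets under the fusion random walk; scalar form of the key Rohlin-tower estimate.) Let (I, 1, ‾, d, N) be a fusion datum, let δ > 0, and let F, K ⊆ I be finite subsets such that F̄ = F and K is (F,δ)-invariant. Then Σ_{X∈F} d(X)² · Σ_{Z∈I} | Σ_{Y∈K} d(Y)² p_X(Y,Z) − 1_K(Z) · d(Z)² | ≤ 2δ · |F|_σ · |K|_σ, where 1_K is the indicator function of K and, for each fixed X, the sum over Z has only finitely many nonzero terms (it is supported on (F·K) ∪ K). -/

import Mathlib

open scoped BigOperators

/-- A fusion datum, modelling `Irr(C)` of a rigid C*-tensor category together with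
its fusion rule. -/
structure FusionDatum where
  /-- the countable index set of simple objects -/
  I : Type
  countable : Countable I
  /-- the unit object -/
  one : I
  /-- conjugation -/
  conj : I → I
  /-- intrinsic dimension -/
  d : I → ℝ
  /-- fusion multiplicities -/
  N : I → I → I → ℕ
  conj_conj : ∀ X, conj (conj X) = X
  conj_one : conj one = one
  one_le_d : ∀ X, 1 ≤ d X
  d_conj : ∀ X, d (conj X) = d X
  N_one_left_self : ∀ Y, N one Y Y = 1
  N_one_left_ne : ∀ Y Z, Y ≠ Z → N one Y Z = 0
  N_one_right_self : ∀ Y, N Y one Y = 1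
  N_one_right_ne : ∀ Y Z, Y ≠ Z → N Y one Z = 0
  mul_support_finite : ∀ X Y, {Z | N X Y Z ≠ 0}.Finite
  dim_rule : ∀ X Y, ∑ᶠ Z, (N X Y Z : ℝ) * d Z = d X * d Y
  frobenius_left : ∀ X Y Z, N X Y Z = N (conj X) Z Y
  frobenius_right : ∀ X Y Z, N X Y Z = N Z (conj Y) X
  assoc : ∀ X Y V Z, ∑ᶠ W, N X Y W * N W V Z = ∑ᶠ U, N Y V U * N X U Z

namespace FusionDatum

variable (𝕀 : FusionDatum)

/-- transition probability of the fusion random walk -/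
noncomputable def p (X Y Z : 𝕀.I) : ℝ :=
  𝕀.d Z * (𝕀.N X Y Z : ℝ) / (𝕀.d X * 𝕀.d Y)

/-- the weighted measure `|F|_σ = Σ_{X∈F} d(X)²` -/
noncomputable def sigma (S : Set 𝕀.I) : ℝ := ∑ᶠ X ∈ S, 𝕀.d X ^ 2

/-- the product set `F·K` -/
def mulSet (F K : Set 𝕀.I) : Set 𝕀.I := {Z | ∃ X ∈ F, ∃ Y ∈ K, 𝕀.N X Y Z ≠ 0}

/-- `F̄ = {X̄ : X ∈ F}` -/
def conjSet (F : Set 𝕀.I) : Set 𝕀.I := (fun X => 𝕀.conj X) '' F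

/-- `K` is `(F,δ)`-invariant when `|(F·K) △ K|_σ ≤ δ·|K|_σ`. -/
def IsInvariant (F K : Set 𝕀.I) (δ : ℝ) : Prop :=
  𝕀.sigma (symmDiff (𝕀.mulSet F K) K) ≤ δ * 𝕀.sigma K

end FusionDatum

namespace FusionDatum

variable (𝕀 : FusionDatum)

lemma d_pos (X : 𝕀.I) : 0 < 𝕀.d X := lt_of_lt_of_le one_pos (𝕀.one_le_d X)

lemma sum_N_d_eq (X Y : 𝕀.I) (S : Finset 𝕀.I) (hS : ∀ Z, 𝕀.N X Y Z ≠ 0 → Z ∈ S) :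
    ∑ Z ∈ S, (𝕀.N X Y Z : ℝ) * 𝕀.d Z = 𝕀.d X * 𝕀.d Y := by
  rw [← 𝕀.dim_rule X Y]
  exact (finsum_eq_sum_of_support_subset _ (fun Z hZ => by
    apply hS
    intro h
    simp [h] at hZ)).symm

lemma sum_N_d_le (X Y : 𝕀.I) (S : Finset 𝕀.I) :
    ∑ Z ∈ S, (𝕀.N X Y Z : ℝ) * 𝕀.d Z ≤ 𝕀.d X * 𝕀.d Y := by
  classical
  have h := 𝕀.sum_N_d_eq X Y (S ∪ (𝕀.mul_support_finite X Y).toFinset)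
    (fun Z hZ => Finset.mem_union_right _ ((𝕀.mul_support_finite X Y).mem_toFinset.2 hZ))
  rw [← h]
  refine Finset.sum_le_sum_of_subset_of_nonneg Finset.subset_union_left (fun Z _ _ => ?_)
  exact mul_nonneg (Nat.cast_nonneg _) (𝕀.d_pos Z).le

end FusionDatum

/-- (ℓ¹-almost invariance of Følner sets under the fusion random
walk.) If `F̄ = F` and `K` is `(F,δ)`-invariant, then
`Σ_{X∈F} d(X)² Σ_Z |Σ_{Y∈K} d(Y)² p_X(Y,Z) − 1_K(Z) d(Z)²| ≤ 2δ |F|_σ |K|_σ`,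
where for each `X` the sum over `Z` has only finitely many nonzero terms. -/
theorem fusion_l1_almost_invariance (𝕀 : FusionDatum) (δ : ℝ) (hδ : 0 < δ)
    (F K : Set 𝕀.I) (hF : F.Finite) (hK : K.Finite)
    (hFconj : 𝕀.conjSet F = F) (hinv : 𝕀.IsInvariant F K δ) :
    (∀ X ∈ F, (Function.support fun Z =>
        |(∑ᶠ Y ∈ K, 𝕀.d Y ^ 2 * 𝕀.p X Y Z)
          - Set.indicator K (fun Z' => 𝕀.d Z' ^ 2) Z|).Finite) ∧
    (∑ᶠ X ∈ F, 𝕀.d X ^ 2 *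
        ∑ᶠ Z, |(∑ᶠ Y ∈ K, 𝕀.d Y ^ 2 * 𝕀.p X Y Z)
          - Set.indicator K (fun Z' => 𝕀.d Z' ^ 2) Z|)
      ≤ 2 * δ * 𝕀.sigma F * 𝕀.sigma K := by
  classical
  set FF := hF.toFinset with hFF
  set KF := hK.toFinset with hKF
  set g : 𝕀.I → 𝕀.I → ℝ := fun X Z => ∑ Y ∈ KF, (𝕀.N X Y Z : ℝ) * 𝕀.d Y with hg
  set fv : 𝕀.I → 𝕀.I → ℝ := fun X Z => (𝕀.d Z / 𝕀.d X) * g X Z with hfv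
  have hdX : ∀ X : 𝕀.I, 𝕀.d X ≠ 0 := fun X => (𝕀.d_pos X).ne'
  -- rewrite the inner finsum
  have hrw : ∀ X Z, (∑ᶠ Y ∈ K, 𝕀.d Y ^ 2 * 𝕀.p X Y Z) = fv X Z := by
    intro X Z
    rw [finsum_mem_eq_finite_toFinset_sum _ hK, hfv]
    simp only [hg, Finset.mul_sum]
    refine Finset.sum_congr rfl fun Y _ => ?_
    simp only [FusionDatum.p]
    field_simp [hdX]
  have hg_nonneg : ∀ X Z, 0 ≤ g X Z := fun X Z =>
    Finset.sum_nonneg fun Y _ => mul_nonneg (Nat.cast_nonneg _) (𝕀.d_pos Y).le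
  have hfv_nonneg : ∀ X Z, 0 ≤ fv X Z := fun X Z =>
    mul_nonneg (div_nonneg (𝕀.d_pos Z).le (𝕀.d_pos X).le) (hg_nonneg X Z)
  -- g rewritten with Frobenius
  have hgF : ∀ X Z, g X Z = ∑ Y ∈ KF, (𝕀.N (𝕀.conj X) Z Y : ℝ) * 𝕀.d Y := by
    intro X Z
    exact Finset.sum_congr rfl fun Y _ => by rw [𝕀.frobenius_left X Y Z]
  have hg_le : ∀ X Z, g X Z ≤ 𝕀.d X * 𝕀.d Z := by
    intro X Z
    rw [hgF]
    have := 𝕀.sum_N_d_le (𝕀.conj X) Z KF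
    rwa [𝕀.d_conj] at this
  have hfv_le : ∀ X Z, fv X Z ≤ 𝕀.d Z ^ 2 := by
    intro X Z
    have h1 : fv X Z ≤ (𝕀.d Z / 𝕀.d X) * (𝕀.d X * 𝕀.d Z) :=
      mul_le_mul_of_nonneg_left (hg_le X Z) (div_nonneg (𝕀.d_pos Z).le (𝕀.d_pos X).le)
    have h2 : (𝕀.d Z / 𝕀.d X) * (𝕀.d X * 𝕀.d Z) = 𝕀.d Z ^ 2 := by
      field_simp [hdX]
    linarith
  -- support finset
  set S : 𝕀.I → Finset 𝕀.I := fun X =>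
    KF ∪ KF.biUnion (fun Y => (𝕀.mul_support_finite X Y).toFinset) with hS
  have hKS : ∀ X, KF ⊆ S X := fun X => Finset.subset_union_left
  have hS0 : ∀ X Z, Z ∉ S X → fv X Z = 0 ∧ Z ∉ K := by
    intro X Z hZ
    constructor
    · have : g X Z = 0 := by
        apply Finset.sum_eq_zero
        intro Y hY
        have hN : 𝕀.N X Y Z = 0 := by
          by_contra hN
          exact hZ (Finset.mem_union_right _ (Finset.mem_biUnion.2
            ⟨Y, hY, (𝕀.mul_support_finite X Y).mem_toFinset.2 hN⟩))
        simp [hN]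
      rw [hfv]; simp [this]
    · intro hZK
      exact hZ (hKS X (hK.mem_toFinset.2 hZK))
  set aab : 𝕀.I → 𝕀.I → ℝ := fun X Z =>
    |fv X Z - Set.indicator K (fun Z' => 𝕀.d Z' ^ 2) Z| with haab
  have habs0 : ∀ X Z, Z ∉ S X → aab X Z = 0 := by
    intro X Z hZ
    obtain ⟨h1, h2⟩ := hS0 X Z hZ
    rw [haab]
    simp [h1, Set.indicator_of_notMem h2]
  -- the finsum over Z as a finset sum
  have hsum : ∀ X, (∑ᶠ Z, |(∑ᶠ Y ∈ K, 𝕀.d Y ^ 2 * 𝕀.p X Y Z)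
          - Set.indicator K (fun Z' => 𝕀.d Z' ^ 2) Z|) = ∑ Z ∈ S X, aab X Z := by
    intro X
    have he : (fun Z => |(∑ᶠ Y ∈ K, 𝕀.d Y ^ 2 * 𝕀.p X Y Z)
          - Set.indicator K (fun Z' => 𝕀.d Z' ^ 2) Z|) = fun Z => aab X Z := by
      funext Z; rw [hrw]
    rw [he]
    apply finsum_eq_sum_of_support_subset
    intro Z hZ
    simp only [Function.mem_support] at hZ
    by_contra hZS
    exact hZ (habs0 X Z hZS)
  set sigK : ℝ := ∑ Z ∈ KF, 𝕀.d Z ^ 2 with hsigK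
  -- total mass of fv is sigK
  have hfvsum : ∀ X, ∑ Z ∈ S X, fv X Z = sigK := by
    intro X
    calc ∑ Z ∈ S X, fv X Z
        = ∑ Z ∈ S X, ∑ Y ∈ KF, (𝕀.d Y / 𝕀.d X) * ((𝕀.N X Y Z : ℝ) * 𝕀.d Z) := by
          refine Finset.sum_congr rfl fun Z _ => ?_
          rw [hfv]; simp only [hg, Finset.mul_sum]
          exact Finset.sum_congr rfl fun Y _ => by ring
      _ = ∑ Y ∈ KF, (𝕀.d Y / 𝕀.d X) * ∑ Z ∈ S X, ((𝕀.N X Y Z : ℝ) * 𝕀.d Z) := by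
          rw [Finset.sum_comm]
          exact Finset.sum_congr rfl fun Y _ => (Finset.mul_sum _ _ _).symm
      _ = ∑ Y ∈ KF, (𝕀.d Y / 𝕀.d X) * (𝕀.d X * 𝕀.d Y) := by
          refine Finset.sum_congr rfl fun Y hY => ?_
          rw [𝕀.sum_N_d_eq X Y (S X) (fun Z hZ => Finset.mem_union_right _
            (Finset.mem_biUnion.2 ⟨Y, hY, (𝕀.mul_support_finite X Y).mem_toFinset.2 hZ⟩))]
      _ = sigK := by
          refine Finset.sum_congr rfl fun Y _ => ?_
          field_simp [hdX]
  have habs_sum : ∀ X, ∑ Z ∈ S X, aab X Z = 2 * ∑ Z ∈ KF, (𝕀.d Z ^ 2 - fv X Z) := by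
    intro X
    have hsd : ∑ Z ∈ S X \ KF, fv X Z + ∑ Z ∈ KF, fv X Z = ∑ Z ∈ S X, fv X Z :=
      Finset.sum_sdiff (hKS X)
    have hsd2 : ∑ Z ∈ S X \ KF, aab X Z + ∑ Z ∈ KF, aab X Z = ∑ Z ∈ S X, aab X Z :=
      Finset.sum_sdiff (hKS X)
    have h1 : ∑ Z ∈ KF, aab X Z = ∑ Z ∈ KF, (𝕀.d Z ^ 2 - fv X Z) := by
      refine Finset.sum_congr rfl fun Z hZ => ?_
      have hZK : Z ∈ K := hK.mem_toFinset.1 hZ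
      rw [haab]
      simp only [Set.indicator_of_mem hZK]
      rw [abs_of_nonpos (by linarith [hfv_le X Z])]
      ring
    have h2 : ∑ Z ∈ S X \ KF, aab X Z = ∑ Z ∈ S X \ KF, fv X Z := by
      refine Finset.sum_congr rfl fun Z hZ => ?_
      have hZK : Z ∉ K := fun h => (Finset.mem_sdiff.1 hZ).2 (hK.mem_toFinset.2 h)
      rw [haab]
      simp only [Set.indicator_of_notMem hZK]
      rw [sub_zero, abs_of_nonneg (hfv_nonneg X Z)]
    have h3 : ∑ Z ∈ KF, (𝕀.d Z ^ 2 - fv X Z) = sigK - ∑ Z ∈ KF, fv X Z := by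
      rw [Finset.sum_sub_distrib, hsigK]
    have h4 := hfvsum X
    linarith
  -- finiteness of mulSet and symmDiff
  have hMK : (𝕀.mulSet F K).Finite := by
    apply Set.Finite.subset (hF.biUnion (fun X _ => hK.biUnion
      (fun Y _ => 𝕀.mul_support_finite X Y)))
    rintro Z ⟨X, hX, Y, hY, hN⟩
    simp only [Set.mem_iUnion]
    exact ⟨X, hX, Y, hY, hN⟩
  have hD : (symmDiff (𝕀.mulSet F K) K).Finite := by
    apply (hMK.union hK).subset
    intro x hx
    rcases Set.mem_symmDiff.1 hx with ⟨h, _⟩ | ⟨h, _⟩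
    exacts [Or.inl h, Or.inr h]
  set DF := hD.toFinset with hDF
  have hsigDeq : 𝕀.sigma (symmDiff (𝕀.mulSet F K) K) = ∑ Y ∈ DF, 𝕀.d Y ^ 2 := by
    rw [FusionDatum.sigma, finsum_mem_eq_finite_toFinset_sum _ hD]
  have hsigKeq : 𝕀.sigma K = sigK := by
    rw [FusionDatum.sigma, finsum_mem_eq_finite_toFinset_sum _ hK]
  have hsigFeq : 𝕀.sigma F = ∑ X ∈ FF, 𝕀.d X ^ 2 := by
    rw [FusionDatum.sigma, finsum_mem_eq_finite_toFinset_sum _ hF]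
  -- key bound
  have hA : ∀ X ∈ FF, ∑ Z ∈ KF, (𝕀.d Z ^ 2 - fv X Z) ≤ δ * sigK := by
    intro X hXFF
    have hXF : X ∈ F := hF.mem_toFinset.1 hXFF
    have hcX : 𝕀.conj X ∈ F := by
      rw [← hFconj]; exact ⟨X, hXF, rfl⟩
    set U : Finset 𝕀.I :=
      (KF.biUnion (fun Z => (𝕀.mul_support_finite (𝕀.conj X) Z).toFinset)) \ KF with hU
    have hUD : U ⊆ DF := by
      intro Y hY
      obtain ⟨hY1, hY2⟩ := Finset.mem_sdiff.1 hY
      obtain ⟨Z, hZ, hN⟩ := Finset.mem_biUnion.1 hY1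
      have hNne : 𝕀.N (𝕀.conj X) Z Y ≠ 0 := (𝕀.mul_support_finite _ _).mem_toFinset.1 hN
      rw [hDF, hD.mem_toFinset, Set.mem_symmDiff]
      left
      exact ⟨⟨𝕀.conj X, hcX, Z, hK.mem_toFinset.1 hZ, hNne⟩,
        fun h => hY2 (hK.mem_toFinset.2 h)⟩
    -- pointwise rewriting of the defect
    have step1 : ∀ Z ∈ KF, 𝕀.d Z ^ 2 - fv X Z
        = (𝕀.d Z / 𝕀.d X) * ∑ Y ∈ U, (𝕀.N (𝕀.conj X) Z Y : ℝ) * 𝕀.d Y := by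
      intro Z hZKF
      set T : Finset 𝕀.I := KF ∪ (𝕀.mul_support_finite (𝕀.conj X) Z).toFinset with hT
      have hTsum : ∑ Y ∈ T, (𝕀.N (𝕀.conj X) Z Y : ℝ) * 𝕀.d Y = 𝕀.d X * 𝕀.d Z := by
        have := 𝕀.sum_N_d_eq (𝕀.conj X) Z T (fun Y hY => Finset.mem_union_right _
          ((𝕀.mul_support_finite _ _).mem_toFinset.2 hY))
        rwa [𝕀.d_conj] at this
      have hKT : KF ⊆ T := Finset.subset_union_left
      have hsplit : ∑ Y ∈ T \ KF, (𝕀.N (𝕀.conj X) Z Y : ℝ) * 𝕀.d Y + g X Z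
          = 𝕀.d X * 𝕀.d Z := by
        rw [hgF, ← hTsum]
        exact Finset.sum_sdiff hKT
      have hTU : ∑ Y ∈ T \ KF, (𝕀.N (𝕀.conj X) Z Y : ℝ) * 𝕀.d Y
          = ∑ Y ∈ U, (𝕀.N (𝕀.conj X) Z Y : ℝ) * 𝕀.d Y := by
        have e1 : ∑ Y ∈ T \ KF, (𝕀.N (𝕀.conj X) Z Y : ℝ) * 𝕀.d Y
            = ∑ Y ∈ (T \ KF) ∪ U, (𝕀.N (𝕀.conj X) Z Y : ℝ) * 𝕀.d Y := by
          apply Finset.sum_subset Finset.subset_union_left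
          intro Y hYu hYn
          have hY2 : Y ∉ KF := by
            rcases Finset.mem_union.1 hYu with h | h
            · exact (Finset.mem_sdiff.1 h).2
            · exact (Finset.mem_sdiff.1 h).2
          have hN : 𝕀.N (𝕀.conj X) Z Y = 0 := by
            by_contra hN
            exact hYn (Finset.mem_sdiff.2 ⟨Finset.mem_union_right _
              ((𝕀.mul_support_finite _ _).mem_toFinset.2 hN), hY2⟩)
          simp [hN]
        have e2 : ∑ Y ∈ U, (𝕀.N (𝕀.conj X) Z Y : ℝ) * 𝕀.d Y
            = ∑ Y ∈ (T \ KF) ∪ U, (𝕀.N (𝕀.conj X) Z Y : ℝ) * 𝕀.d Y := by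
          apply Finset.sum_subset Finset.subset_union_right
          intro Y hYu hYn
          have hY2 : Y ∉ KF := by
            rcases Finset.mem_union.1 hYu with h | h
            · exact (Finset.mem_sdiff.1 h).2
            · exact (Finset.mem_sdiff.1 h).2
          have hN : 𝕀.N (𝕀.conj X) Z Y = 0 := by
            by_contra hN
            exact hYn (Finset.mem_sdiff.2 ⟨Finset.mem_biUnion.2
              ⟨Z, hZKF, (𝕀.mul_support_finite _ _).mem_toFinset.2 hN⟩, hY2⟩)
          simp [hN]
        rw [e1, e2]
      have e3 : (𝕀.d Z / 𝕀.d X) * (𝕀.d X * 𝕀.d Z) = 𝕀.d Z ^ 2 := by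
        field_simp [hdX]
      have e4 : fv X Z = (𝕀.d Z / 𝕀.d X) * g X Z := rfl
      calc 𝕀.d Z ^ 2 - fv X Z
          = (𝕀.d Z / 𝕀.d X) * (𝕀.d X * 𝕀.d Z) - (𝕀.d Z / 𝕀.d X) * g X Z := by
            rw [e3, e4]
        _ = (𝕀.d Z / 𝕀.d X) * (𝕀.d X * 𝕀.d Z - g X Z) := by ring
        _ = (𝕀.d Z / 𝕀.d X) * ∑ Y ∈ U, (𝕀.N (𝕀.conj X) Z Y : ℝ) * 𝕀.d Y := by
            rw [← hTU]; congr 1; linarith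
    have step2 : ∑ Z ∈ KF, (𝕀.d Z ^ 2 - fv X Z) ≤ ∑ Y ∈ U, 𝕀.d Y ^ 2 := by
      calc ∑ Z ∈ KF, (𝕀.d Z ^ 2 - fv X Z)
          = ∑ Z ∈ KF, ∑ Y ∈ U, (𝕀.d Y / 𝕀.d X) * ((𝕀.N X Y Z : ℝ) * 𝕀.d Z) := by
            refine Finset.sum_congr rfl fun Z hZ => ?_
            rw [step1 Z hZ, Finset.mul_sum]
            refine Finset.sum_congr rfl fun Y _ => ?_
            rw [𝕀.frobenius_left X Y Z]; ring
        _ = ∑ Y ∈ U, (𝕀.d Y / 𝕀.d X) * ∑ Z ∈ KF, ((𝕀.N X Y Z : ℝ) * 𝕀.d Z) := by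
            rw [Finset.sum_comm]
            exact Finset.sum_congr rfl fun Y _ => (Finset.mul_sum _ _ _).symm
        _ ≤ ∑ Y ∈ U, (𝕀.d Y / 𝕀.d X) * (𝕀.d X * 𝕀.d Y) := by
            refine Finset.sum_le_sum fun Y _ => ?_
            exact mul_le_mul_of_nonneg_left (𝕀.sum_N_d_le X Y KF)
              (div_nonneg (𝕀.d_pos Y).le (𝕀.d_pos X).le)
        _ = ∑ Y ∈ U, 𝕀.d Y ^ 2 := by
            refine Finset.sum_congr rfl fun Y _ => ?_
            field_simp [hdX]
    have step3 : ∑ Y ∈ U, 𝕀.d Y ^ 2 ≤ ∑ Y ∈ DF, 𝕀.d Y ^ 2 :=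
      Finset.sum_le_sum_of_subset_of_nonneg hUD (fun Y _ _ => sq_nonneg _)
    have := hinv
    rw [FusionDatum.IsInvariant, hsigDeq, hsigKeq] at this
    linarith
  constructor
  · intro X _
    apply (S X).finite_toSet.subset
    intro Z hZ
    simp only [Function.mem_support] at hZ
    by_contra hZS
    apply hZ
    rw [hrw]
    have := habs0 X Z (by simpa using hZS)
    rw [haab] at this
    exact this
  · rw [finsum_mem_eq_finite_toFinset_sum _ hF, hsigFeq, hsigKeq]
    have hstep : ∀ X ∈ FF, 𝕀.d X ^ 2 *
        (∑ᶠ Z, |(∑ᶠ Y ∈ K, 𝕀.d Y ^ 2 * 𝕀.p X Y Z)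
          - Set.indicator K (fun Z' => 𝕀.d Z' ^ 2) Z|)
        ≤ 𝕀.d X ^ 2 * (2 * (δ * sigK)) := by
      intro X hX
      rw [hsum X, habs_sum X]
      exact mul_le_mul_of_nonneg_left (by linarith [hA X hX]) (sq_nonneg _)
    calc ∑ X ∈ FF, 𝕀.d X ^ 2 *
        (∑ᶠ Z, |(∑ᶠ Y ∈ K, 𝕀.d Y ^ 2 * 𝕀.p X Y Z)
          - Set.indicator K (fun Z' => 𝕀.d Z' ^ 2) Z|)
        ≤ ∑ X ∈ FF, 𝕀.d X ^ 2 * (2 * (δ * sigK)) := Finset.sum_le_sum hstep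
      _ = 2 * δ * (∑ X ∈ FF, 𝕀.d X ^ 2) * sigK := by
          rw [← Finset.sum_mul]
          ring
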